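/- arXiv:2305.02376 — 4 statements merged into one kernel-verified Lean document; each statement's English description precedes it below -/
import Mathlib

section
/- There exists a constant δ_0 > 0 such that for every δ > δ_0/√T and every t ∈ [0,T]: lim_{m→∞} P( max_{1≤i≤m} sup_{s∈[0,t]} |β̇_i^m(s)| > δ m^{1/2} 2^{m/2} ) = 0. -/
open MeasureTheory ProbabilityTheory Filter
open scoped NNReal ENNReal

noncomputable section

variable {Ω : Type*} {mΩ : MeasurableSpace Ω}

/-- A standard real-valued Brownian motion (extended by `0` on `(-∞,0]`),
adapted to the filtration `F`, with increments after time `s` independent of `F s`. -/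
structure IsBM (P : Measure Ω) (F : Filtration ℝ mΩ) (B : ℝ → Ω → ℝ) : Prop where
  zero_of_nonpos : ∀ t ≤ (0 : ℝ), ∀ ω, B t ω = 0
  cont : ∀ ω, Continuous fun t => B t ω
  adapted : Adapted F fun t => B t
  gauss_incr : ∀ s t : ℝ, 0 ≤ s → s ≤ t →
    P.map (fun ω => B t ω - B s ω) = gaussianReal 0 (Real.toNNReal (t - s))
  indep_incr : ∀ s t : ℝ, 0 ≤ s → s ≤ t →
    Indep (MeasurableSpace.comap (fun ω => B t ω - B s ω) (borel ℝ)) (F s) P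

/-- Mutual independence of a family of real-valued processes. -/
def IndepFamily (P : Measure Ω) (B : ℕ → ℝ → Ω → ℝ) : Prop :=
  iIndepFun (m := fun _ : ℕ => (inferInstance : MeasurableSpace (ℝ → ℝ)))
    (fun i ω t => B i t ω) P

/-- `β̇ᵢᵐ(t) = ϖ⁻¹ (βᵢ(⌊t/ϖ⌋ϖ) − βᵢ((⌊t/ϖ⌋−1)ϖ))` with `ϖ = T/2^m`. -/
def bdot (T : ℝ) (m : ℕ) (B : ℝ → Ω → ℝ) (t : ℝ) (ω : Ω) : ℝ :=
  (B ((⌊t / (T / 2 ^ m)⌋ : ℝ) * (T / 2 ^ m)) ω -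
      B (((⌊t / (T / 2 ^ m)⌋ : ℝ) - 1) * (T / 2 ^ m)) ω) / (T / 2 ^ m)

section AuxLemmas
open Real

/-- expectation of `exp(x²/(4v))` under a Gaussian with variance `v`. -/
lemma lintegral_exp_sq_gaussian {v : ℝ≥0} (hv : v ≠ 0) :
    ∫⁻ x, ENNReal.ofReal (Real.exp (x ^ 2 / (4 * (v : ℝ)))) ∂(gaussianReal 0 v)
      = ENNReal.ofReal (Real.sqrt 2) := by
  have hvpos : (0 : ℝ) < v := by
    have := v.coe_nonneg
    rcases this.lt_or_eq with h | h
    · exact h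
    · exact absurd (by exact_mod_cast h.symm) hv
  have hg : Measurable fun x : ℝ => ENNReal.ofReal (Real.exp (x ^ 2 / (4 * (v : ℝ)))) :=
    ENNReal.measurable_ofReal.comp
      (Real.measurable_exp.comp ((measurable_id.pow_const 2).div_const _))
  rw [gaussianReal_of_var_ne_zero 0 hv,
    lintegral_withDensity_eq_lintegral_mul _ (measurable_gaussianPDF 0 v) hg]
  have heq : ∀ x : ℝ,
      (gaussianPDF 0 v * fun x : ℝ => ENNReal.ofReal (Real.exp (x ^ 2 / (4 * (v : ℝ))))) x
        = ENNReal.ofReal ((Real.sqrt (2 * Real.pi * v))⁻¹ * Real.exp (-(1 / (4 * (v : ℝ))) * x ^ 2)) := by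
    intro x
    simp only [Pi.mul_apply, gaussianPDF]
    rw [← ENNReal.ofReal_mul (gaussianPDFReal_nonneg 0 v x)]
    congr 1
    unfold gaussianPDFReal
    rw [mul_assoc, ← Real.exp_add]
    congr 1
    field_simp
    ring
  simp_rw [heq]
  have hint : Integrable (fun x : ℝ =>
      (Real.sqrt (2 * Real.pi * v))⁻¹ * Real.exp (-(1 / (4 * (v : ℝ))) * x ^ 2)) :=
    (integrable_exp_neg_mul_sq (by positivity)).const_mul _
  rw [← ofReal_integral_eq_lintegral_ofReal hint
    (Filter.Eventually.of_forall fun x => by positivity)]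
  congr 1
  rw [MeasureTheory.integral_const_mul, integral_gaussian]
  have h4 : Real.pi / (1 / (4 * (v : ℝ))) = 2 * (2 * Real.pi * v) := by
    field_simp
    ring
  rw [h4, Real.sqrt_mul (by norm_num : (0:ℝ) ≤ 2)]
  have hne : Real.sqrt (2 * Real.pi * v) ≠ 0 := by
    have : (0:ℝ) < 2 * Real.pi * v := by positivity
    exact (Real.sqrt_pos.mpr this).ne'
  field_simp

/-- Gaussian tail bound `P(|X| > a) ≤ √2 exp(-a²/(4v))`. -/
lemma gaussian_tail {v : ℝ≥0} (hv : v ≠ 0) {a : ℝ} (ha : 0 ≤ a) :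
    gaussianReal 0 v {x | a < |x|}
      ≤ ENNReal.ofReal (Real.sqrt 2 * Real.exp (-(a ^ 2 / (4 * (v : ℝ))))) := by
  have hg : Measurable fun x : ℝ => ENNReal.ofReal (Real.exp (x ^ 2 / (4 * (v : ℝ)))) :=
    ENNReal.measurable_ofReal.comp
      (Real.measurable_exp.comp ((measurable_id.pow_const 2).div_const _))
  have hvpos : (0 : ℝ) < v := by
    have := v.coe_nonneg
    rcases this.lt_or_eq with h | h
    · exact h
    · exact absurd (by exact_mod_cast h.symm) hv
  have hmono : {x : ℝ | a < |x|} ⊆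
      {x : ℝ | ENNReal.ofReal (Real.exp (a ^ 2 / (4 * (v : ℝ))))
        ≤ ENNReal.ofReal (Real.exp (x ^ 2 / (4 * (v : ℝ)))) } := by
    intro x hx
    simp only [Set.mem_setOf_eq] at hx ⊢
    have h2 : a ^ 2 ≤ x ^ 2 := by nlinarith [abs_nonneg x, sq_abs x]
    exact ENNReal.ofReal_le_ofReal (Real.exp_le_exp.mpr (by gcongr))
  calc gaussianReal 0 v {x | a < |x|}
      ≤ gaussianReal 0 v {x : ℝ | ENNReal.ofReal (Real.exp (a ^ 2 / (4 * (v : ℝ))))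
          ≤ ENNReal.ofReal (Real.exp (x ^ 2 / (4 * (v : ℝ)))) } := measure_mono hmono
    _ ≤ (∫⁻ x, ENNReal.ofReal (Real.exp (x ^ 2 / (4 * (v : ℝ)))) ∂(gaussianReal 0 v))
          / ENNReal.ofReal (Real.exp (a ^ 2 / (4 * (v : ℝ)))) :=
        meas_ge_le_lintegral_div hg.aemeasurable
          (ENNReal.ofReal_pos.mpr (Real.exp_pos _)).ne' ENNReal.ofReal_ne_top
    _ = ENNReal.ofReal (Real.sqrt 2) / ENNReal.ofReal (Real.exp (a ^ 2 / (4 * (v : ℝ)))) := by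
        rw [lintegral_exp_sq_gaussian hv]
    _ = ENNReal.ofReal (Real.sqrt 2 * Real.exp (-(a ^ 2 / (4 * (v : ℝ))))) := by
        rw [Real.exp_neg, ← div_eq_mul_inv, ENNReal.ofReal_div_of_pos (Real.exp_pos _)]

lemma aux_tendsto {b : ℝ} (hb : 0 < b) :
    Tendsto (fun m : ℕ => (m : ℝ) * Real.exp (-(b * m))) atTop (nhds 0) := by
  have h1 : Tendsto (fun x : ℝ => x * Real.exp (-x)) atTop (nhds 0) := by
    simpa using tendsto_pow_mul_exp_neg_atTop_nhds_zero 1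
  have h2 : Tendsto (fun m : ℕ => b * (m : ℝ)) atTop atTop :=
    (tendsto_natCast_atTop_atTop).const_mul_atTop hb
  have h3 := (h1.comp h2).const_mul b⁻¹
  rw [mul_zero] at h3
  refine h3.congr fun m => ?_
  simp only [Function.comp_apply]
  field_simp


end AuxLemmas

/-- there is `δ₀ > 0` such that for every `δ > δ₀/√T` and every
`t ∈ [0,T]`, `P( max_{1≤i≤m} sup_{s∈[0,t]} |β̇ᵢᵐ(s)| > δ m^{1/2} 2^{m/2} ) → 0`
as `m → ∞`. -/
theorem statement5 (T : ℝ) (hT : 0 < T) (P : Measure Ω) [IsProbabilityMeasure P]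
    (F : Filtration ℝ mΩ) (B : ℕ → ℝ → Ω → ℝ)
    (hBM : ∀ i, IsBM P F (B i)) (hind : IndepFamily P B) :
    ∃ δ₀ : ℝ, 0 < δ₀ ∧ ∀ δ : ℝ, δ₀ / Real.sqrt T < δ → ∀ t ∈ Set.Icc (0 : ℝ) T,
      Tendsto
        (fun m : ℕ =>
          P {ω | δ * Real.sqrt m * Real.sqrt (2 ^ m) <
              ⨆ i ∈ Finset.range m, ⨆ s ∈ Set.Icc (0 : ℝ) t, |bdot T m (B i) s ω|})
        atTop (nhds 0) := by
  refine ⟨2, two_pos, ?_⟩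
  intro δ hδ t ht
  have hsT : 0 < Real.sqrt T := Real.sqrt_pos.mpr hT
  have hδpos : 0 < δ := lt_trans (by positivity) hδ
  have hδT : 4 < δ ^ 2 * T := by
    have h1 : 2 < δ * Real.sqrt T := by rwa [div_lt_iff₀ hsT] at hδ
    nlinarith [Real.sq_sqrt hT.le, Real.sqrt_nonneg T]
  set a : ℝ := δ ^ 2 * T / 4 with ha_def
  have ha1 : 1 < a := by rw [ha_def]; linarith
  have hb : 0 < a - Real.log 2 := by
    have := Real.log_two_lt_d9
    linarith
  -- the per-m bound
  have hbound : ∀ m : ℕ,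
      P {ω | δ * Real.sqrt m * Real.sqrt (2 ^ m) <
          ⨆ i ∈ Finset.range m, ⨆ s ∈ Set.Icc (0 : ℝ) t, |bdot T m (B i) s ω|}
        ≤ ((m * (2 ^ m + 1) : ℕ) : ℝ≥0∞)
            * ENNReal.ofReal (Real.sqrt 2 * Real.exp (-(a * m))) := by
    intro m
    have hϖ : 0 < T / 2 ^ m := by positivity
    set c : ℝ := δ * Real.sqrt m * Real.sqrt (2 ^ m) with hc_def
    have hc : 0 ≤ c := by positivity
    -- the union-bound inclusion
    have key : {ω | c < ⨆ i ∈ Finset.range m, ⨆ s ∈ Set.Icc (0 : ℝ) t, |bdot T m (B i) s ω|}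
        ⊆ ⋃ i ∈ Finset.range m, ⋃ k ∈ Finset.range (2 ^ m + 1),
            {ω | c * (T / 2 ^ m) <
              |B i ((k : ℝ) * (T / 2 ^ m)) ω - B i (((k : ℝ) - 1) * (T / 2 ^ m)) ω|} := by
      intro ω hω
      simp only [Set.mem_setOf_eq] at hω
      by_contra hco
      simp only [Set.mem_iUnion, Set.mem_setOf_eq, not_exists, not_lt,
        Finset.mem_range] at hco
      refine absurd hω (not_lt.mpr ?_)
      refine Real.iSup_le (fun i => Real.iSup_le (fun hi => Real.iSup_le (fun s =>
        Real.iSup_le (fun hs => ?_) hc) hc) hc) hc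
      obtain ⟨hs0, hst⟩ := hs
      set k : ℕ := (⌊s / (T / 2 ^ m)⌋).toNat with hk_def
      have hfl0 : 0 ≤ ⌊s / (T / 2 ^ m)⌋ := Int.floor_nonneg.mpr (by positivity)
      have hkc : ((⌊s / (T / 2 ^ m)⌋ : ℤ) : ℝ) = (k : ℝ) := by
        rw [hk_def]
        exact_mod_cast (Int.toNat_of_nonneg hfl0).symm
      have hklt : k < 2 ^ m + 1 := by
        have h1 : s / (T / 2 ^ m) ≤ 2 ^ m := by
          rw [div_le_iff₀ hϖ]
          have h2 : (2 : ℝ) ^ m * (T / 2 ^ m) = T := by field_simp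
          rw [h2]
          exact le_trans hst ht.2
        have h2 : ⌊s / (T / 2 ^ m)⌋ ≤ ((2 : ℤ) ^ m) := by
          have h3 := Int.floor_mono h1
          have h4 : ⌊((2 : ℝ) ^ m)⌋ = (2 : ℤ) ^ m := by
            rw [show ((2 : ℝ) ^ m) = (((2 : ℤ) ^ m : ℤ) : ℝ) by push_cast; ring]
            exact Int.floor_intCast _
          rwa [h4] at h3
        have : k ≤ 2 ^ m := by
          rw [hk_def]
          exact Int.toNat_le.mpr (by exact_mod_cast h2)
        omega
      have hineq := hco i (Finset.mem_range.mp hi) k hklt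
      simp only [bdot]
      rw [abs_div, abs_of_pos hϖ, div_le_iff₀ hϖ, hkc]
      exact hineq
    -- per-increment bound
    have hterm : ∀ i k : ℕ,
        P {ω | c * (T / 2 ^ m) <
            |B i ((k : ℝ) * (T / 2 ^ m)) ω - B i (((k : ℝ) - 1) * (T / 2 ^ m)) ω|}
          ≤ ENNReal.ofReal (Real.sqrt 2 * Real.exp (-(a * m))) := by
      intro i k
      rcases Nat.eq_zero_or_pos k with rfl | hk1
      · have hempty : {ω | c * (T / 2 ^ m) <
            |B i (((0 : ℕ) : ℝ) * (T / 2 ^ m)) ω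
              - B i ((((0 : ℕ) : ℝ) - 1) * (T / 2 ^ m)) ω|} = ∅ := by
          ext ω
          simp only [Set.mem_setOf_eq, Set.mem_empty_iff_false, iff_false, not_lt,
            Nat.cast_zero, zero_mul, zero_sub, neg_mul, one_mul]
          rw [(hBM i).zero_of_nonpos 0 le_rfl ω,
            (hBM i).zero_of_nonpos (-(T / 2 ^ m)) (by linarith) ω]
          simp
          positivity
        rw [hempty]
        simp
      · set s₀ : ℝ := ((k : ℝ) - 1) * (T / 2 ^ m) with hs₀
        set t₀ : ℝ := (k : ℝ) * (T / 2 ^ m) with ht₀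
        have hk1' : (1 : ℝ) ≤ (k : ℝ) := by exact_mod_cast hk1
        have hs₀0 : 0 ≤ s₀ := mul_nonneg (by linarith) hϖ.le
        have hst₀ : s₀ ≤ t₀ := by
          rw [hs₀, ht₀]
          nlinarith
        have hX : Measurable fun ω => B i t₀ ω - B i s₀ ω :=
          (Measurable.mono ((hBM i).adapted t₀) (F.le t₀) le_rfl).sub
            (Measurable.mono ((hBM i).adapted s₀) (F.le s₀) le_rfl)
        have hmap := (hBM i).gauss_incr s₀ t₀ hs₀0 hst₀
        rw [show t₀ - s₀ = T / 2 ^ m by rw [hs₀, ht₀]; ring] at hmap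
        have hS : MeasurableSet {x : ℝ | c * (T / 2 ^ m) < |x|} :=
          measurableSet_lt measurable_const measurable_id.abs
        have hpre : {ω | c * (T / 2 ^ m) < |B i t₀ ω - B i s₀ ω|}
            = (fun ω => B i t₀ ω - B i s₀ ω) ⁻¹' {x : ℝ | c * (T / 2 ^ m) < |x|} := rfl
        rw [hpre, ← Measure.map_apply hX hS, hmap]
        have hv : Real.toNNReal (T / 2 ^ m) ≠ 0 := by
          simp only [ne_eq, Real.toNNReal_eq_zero, not_le]
          exact hϖ
        refine le_trans (gaussian_tail hv (by positivity)) (le_of_eq ?_)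
        congr 2
        have hcoe : ((Real.toNNReal (T / 2 ^ m)) : ℝ) = T / 2 ^ m :=
          Real.coe_toNNReal _ hϖ.le
        rw [hcoe]
        have hc2 : c ^ 2 = δ ^ 2 * (m : ℝ) * 2 ^ m := by
          rw [hc_def, mul_pow, mul_pow, Real.sq_sqrt (Nat.cast_nonneg m),
            Real.sq_sqrt (by positivity : (0:ℝ) ≤ 2 ^ m)]
        have h2m0 : ((2 : ℝ) ^ m) ≠ 0 := by positivity
        rw [show (c * (T / 2 ^ m)) ^ 2 / (4 * (T / 2 ^ m)) = c ^ 2 * (T / 2 ^ m) / 4 by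
          field_simp, hc2, ha_def]
        field_simp
    -- combine
    calc P {ω | c < ⨆ i ∈ Finset.range m, ⨆ s ∈ Set.Icc (0 : ℝ) t, |bdot T m (B i) s ω|}
        ≤ P (⋃ i ∈ Finset.range m, ⋃ k ∈ Finset.range (2 ^ m + 1),
            {ω | c * (T / 2 ^ m) <
              |B i ((k : ℝ) * (T / 2 ^ m)) ω - B i (((k : ℝ) - 1) * (T / 2 ^ m)) ω|}) :=
          measure_mono key
      _ ≤ ∑ i ∈ Finset.range m, P (⋃ k ∈ Finset.range (2 ^ m + 1),
            {ω | c * (T / 2 ^ m) <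
              |B i ((k : ℝ) * (T / 2 ^ m)) ω - B i (((k : ℝ) - 1) * (T / 2 ^ m)) ω|}) :=
          measure_biUnion_finset_le _ _
      _ ≤ ∑ i ∈ Finset.range m, ∑ k ∈ Finset.range (2 ^ m + 1),
            P {ω | c * (T / 2 ^ m) <
              |B i ((k : ℝ) * (T / 2 ^ m)) ω - B i (((k : ℝ) - 1) * (T / 2 ^ m)) ω|} :=
          Finset.sum_le_sum fun i _ => measure_biUnion_finset_le _ _
      _ ≤ ∑ _i ∈ Finset.range m, ∑ _k ∈ Finset.range (2 ^ m + 1),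
            ENNReal.ofReal (Real.sqrt 2 * Real.exp (-(a * m))) :=
          Finset.sum_le_sum fun i _ => Finset.sum_le_sum fun k _ => hterm i k
      _ = ((m * (2 ^ m + 1) : ℕ) : ℝ≥0∞)
            * ENNReal.ofReal (Real.sqrt 2 * Real.exp (-(a * m))) := by
          simp [Finset.sum_const, Finset.card_range, nsmul_eq_mul]
          push_cast
          ring
  -- the upper bound tends to zero
  have hupper : Tendsto (fun m : ℕ => ((m * (2 ^ m + 1) : ℕ) : ℝ≥0∞)
      * ENNReal.ofReal (Real.sqrt 2 * Real.exp (-(a * m)))) atTop (nhds 0) := by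
    have hre : Tendsto (fun m : ℕ => ((m * (2 ^ m + 1) : ℕ) : ℝ)
        * (Real.sqrt 2 * Real.exp (-(a * m)))) atTop (nhds 0) := by
      have hg : Tendsto (fun m : ℕ => (2 * Real.sqrt 2)
          * ((m : ℝ) * Real.exp (-((a - Real.log 2) * m)))) atTop (nhds 0) := by
        have := (aux_tendsto hb).const_mul (2 * Real.sqrt 2)
        rwa [mul_zero] at this
      refine squeeze_zero (fun m => by positivity) (fun m => ?_) hg
      have h2m : Real.exp (-(a * m)) = Real.exp (-((a - Real.log 2) * m)) * ((2:ℝ) ^ m)⁻¹ := by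
        have : ((2:ℝ) ^ m)⁻¹ = Real.exp (-((m : ℝ) * Real.log 2)) := by
          rw [Real.exp_neg, Real.exp_nat_mul, Real.exp_log two_pos]
        rw [this, ← Real.exp_add]
        congr 1
        ring
      have h2mpos : (0:ℝ) < 2 ^ m := by positivity
      have hle : ((2:ℝ) ^ m + 1) * ((2:ℝ) ^ m)⁻¹ ≤ 2 := by
        rw [mul_inv_le_iff₀ h2mpos]
        have : (1:ℝ) ≤ 2 ^ m := one_le_pow₀ one_le_two
        linarith
      calc ((m * (2 ^ m + 1) : ℕ) : ℝ) * (Real.sqrt 2 * Real.exp (-(a * m)))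
          = (((2:ℝ) ^ m + 1) * ((2:ℝ) ^ m)⁻¹)
            * ((m : ℝ) * Real.sqrt 2 * Real.exp (-((a - Real.log 2) * m))) := by
            rw [h2m]; push_cast; ring
        _ ≤ 2 * ((m : ℝ) * Real.sqrt 2 * Real.exp (-((a - Real.log 2) * m))) := by
            apply mul_le_mul_of_nonneg_right hle
            positivity
        _ = (2 * Real.sqrt 2) * ((m : ℝ) * Real.exp (-((a - Real.log 2) * m))) := by ring
    have := ENNReal.tendsto_ofReal hre
    rw [ENNReal.ofReal_zero] at this
    refine this.congr fun m => ?_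
    rw [ENNReal.ofReal_mul (by positivity), ENNReal.ofReal_natCast]
  exact tendsto_of_tendsto_of_tendsto_of_le_of_le tendsto_const_nhds hupper
    (fun m => zero_le) hbound


end
end

section
/- There exists a constant δ_0 > 0 such that for every δ > δ_0/√T and every t ∈ [0,T]: lim_{m→∞} P( sup_{s∈[0,t]} ‖Ẇ^m(s)‖_U > δ m 2^{m/2} ) = 0, where ‖Ẇ^m(s)‖_U := ( Σ_{i=1}^m β̇_i^m(s)^2 )^{1/2}. -/
open MeasureTheory ProbabilityTheory Filter

noncomputable section

variable {Ω : Type*} {mΩ : MeasurableSpace Ω}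

variable {U : Type*} [NormedAddCommGroup U] [InnerProductSpace ℝ U]

/-- `Ẇᵐ(t) = Σ_{i<m} β̇ᵢᵐ(t) eᵢ ∈ U` (the basis is reindexed from `0`). -/
def Wdot (T : ℝ) (m : ℕ) (B : ℕ → ℝ → Ω → ℝ) (e : ℕ → U) (t : ℝ) (ω : Ω) : U :=
  ∑ i ∈ Finset.range m, bdot T m (B i) t ω • e i


section StatementSixAux
open Real in

lemma gauss_tail (v : NNReal) (hv : v ≠ 0) (b : ℝ) (hb : 0 ≤ b) :
    gaussianReal 0 v {x : ℝ | b < |x|} ≤ ENNReal.ofReal (2 * Real.exp (-b ^ 2 / (4 * v))) := by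
  have hw : (0 : ℝ) < v := by positivity
  have h2v : (2 * v : NNReal) ≠ 0 := by simpa using hv
  have key : ∀ x ∈ {x : ℝ | b < |x|},
      gaussianPDF 0 v x ≤
        ENNReal.ofReal (Real.sqrt 2 * Real.exp (-b ^ 2 / (4 * v))) * gaussianPDF 0 (2 * v) x := by
    intro x hx
    have hx2 : b ^ 2 ≤ x ^ 2 := by
      have h1 : b ≤ |x| := le_of_lt hx
      calc b ^ 2 ≤ |x| ^ 2 := by apply pow_le_pow_left₀ hb h1
      _ = x ^ 2 := sq_abs x
    rw [gaussianPDF, gaussianPDF, ← ENNReal.ofReal_mul (by positivity)]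
    apply ENNReal.ofReal_le_ofReal
    unfold gaussianPDFReal
    have hc : ((2 * v : NNReal) : ℝ) = 2 * (v : ℝ) := by push_cast; ring
    rw [hc]
    have hsqrt : Real.sqrt (2 * π * (2 * (v:ℝ))) = Real.sqrt 2 * Real.sqrt (2 * π * v) := by
      rw [show 2 * π * (2 * (v:ℝ)) = 2 * (2 * π * v) by ring, Real.sqrt_mul (by norm_num)]
    rw [hsqrt]
    have hs2 : (0:ℝ) < Real.sqrt 2 := by positivity
    have hsp : (0:ℝ) < Real.sqrt (2 * π * v) := by positivity
    have hexp : Real.exp (-(x - 0) ^ 2 / (2 * v)) ≤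
        Real.exp (-b ^ 2 / (4 * v)) * Real.exp (-(x - 0) ^ 2 / (2 * (2 * v))) := by
      rw [← Real.exp_add, Real.exp_le_exp, sub_zero]
      rw [div_add_div _ _ (by positivity) (by positivity)]
      rw [div_le_div_iff₀ (by positivity) (by positivity)]
      nlinarith [mul_le_mul_of_nonneg_left hx2 (mul_nonneg hw.le hw.le), hw]
    calc (Real.sqrt (2 * π * v))⁻¹ * Real.exp (-(x - 0) ^ 2 / (2 * v))
        ≤ (Real.sqrt (2 * π * v))⁻¹ *
          (Real.exp (-b ^ 2 / (4 * v)) * Real.exp (-(x - 0) ^ 2 / (2 * (2 * v)))) := by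
          apply mul_le_mul_of_nonneg_left hexp (by positivity)
      _ = Real.sqrt 2 * Real.exp (-b ^ 2 / (4 * ↑v)) *
          ((Real.sqrt 2 * Real.sqrt (2 * π * ↑v))⁻¹ * Real.exp (-(x - 0) ^ 2 / (2 * (2 * ↑v)))) := by
          field_simp
  calc gaussianReal 0 v {x : ℝ | b < |x|}
      = ∫⁻ x in {x : ℝ | b < |x|}, gaussianPDF 0 v x := gaussianReal_apply 0 hv _
    _ ≤ ∫⁻ x in {x : ℝ | b < |x|},
        ENNReal.ofReal (Real.sqrt 2 * Real.exp (-b ^ 2 / (4 * v))) * gaussianPDF 0 (2 * v) x :=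
        setLIntegral_mono ((measurable_const.mul (measurable_gaussianPDF 0 (2*v)))) key
    _ ≤ ∫⁻ x, ENNReal.ofReal (Real.sqrt 2 * Real.exp (-b ^ 2 / (4 * v))) *
          gaussianPDF 0 (2 * v) x := setLIntegral_le_lintegral _ _
    _ = ENNReal.ofReal (Real.sqrt 2 * Real.exp (-b ^ 2 / (4 * v))) := by
        rw [lintegral_const_mul _ (measurable_gaussianPDF 0 (2*v)),
          lintegral_gaussianPDF_eq_one 0 h2v, mul_one]
    _ ≤ ENNReal.ofReal (2 * Real.exp (-b ^ 2 / (4 * v))) := by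
        apply ENNReal.ofReal_le_ofReal
        have : Real.sqrt 2 ≤ 2 := by
          nlinarith [Real.sq_sqrt (by norm_num : (2:ℝ) ≥ 0), Real.sqrt_nonneg 2]
        nlinarith [Real.exp_pos (-b ^ 2 / (4 * (v:ℝ)))]

lemma perm_bound (T : ℝ) (hT : 0 < T) (P : Measure Ω) [IsProbabilityMeasure P]
    (F : Filtration ℝ mΩ) (B : ℕ → ℝ → Ω → ℝ) (hBM : ∀ i, IsBM P F (B i))
    (e : ℕ → U) (he : Orthonormal ℝ e) {δ : ℝ} (hδ : 0 < δ) {t : ℝ}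
    (ht : t ∈ Set.Icc (0 : ℝ) T) (m : ℕ) :
    P {ω | δ * m * Real.sqrt (2 ^ m) < ⨆ s ∈ Set.Icc (0 : ℝ) t, ‖Wdot T m B e s ω‖} ≤
      ((m * (2 ^ m + 1) : ℕ) : ENNReal) * ENNReal.ofReal (2 * Real.exp (-(δ ^ 2 * T / 4) * m)) := by
  have h2m : (0 : ℝ) < 2 ^ m := by positivity
  have hϖ : (0 : ℝ) < T / 2 ^ m := by positivity
  set ϖ : ℝ := T / 2 ^ m with hϖdef
  set a : ℝ := δ * Real.sqrt m * Real.sqrt (2 ^ m) with hadef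
  set R : ℝ := δ * m * Real.sqrt (2 ^ m) with hRdef
  have ha : 0 ≤ a := by positivity
  have hR : 0 ≤ R := by positivity
  set D : ℕ → ℕ → Ω → ℝ :=
    fun i k ω => (B i ((k : ℝ) * ϖ) ω - B i (((k : ℝ) - 1) * ϖ) ω) / ϖ with hDdef
  set A : ℕ → ℕ → Set Ω := fun i k => {ω | a < |D i k ω|} with hAdef
  -- the square identities
  have hsqm : Real.sqrt (m : ℝ) ^ 2 = (m : ℝ) := Real.sq_sqrt (Nat.cast_nonneg m)
  have hsq2m : Real.sqrt ((2 : ℝ) ^ m) ^ 2 = (2 : ℝ) ^ m := Real.sq_sqrt h2m.le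
  -- inclusion
  have hincl : {ω | δ * m * Real.sqrt (2 ^ m) < ⨆ s ∈ Set.Icc (0 : ℝ) t, ‖Wdot T m B e s ω‖} ⊆
      ⋃ i ∈ Finset.range m, ⋃ k ∈ Finset.range (2 ^ m + 1), A i k := by
    intro ω hω
    by_contra hnot
    simp only [Set.mem_iUnion, not_exists, hAdef, Set.mem_setOf_eq, not_lt] at hnot
    apply absurd hω
    simp only [Set.mem_setOf_eq, not_lt]
    apply Real.iSup_le _ hR
    intro s
    apply Real.iSup_le _ hR
    intro hs
    -- identify the floor index
    set K : ℤ := ⌊s / ϖ⌋ with hKdef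
    have hK0 : 0 ≤ K := Int.floor_nonneg.mpr (div_nonneg hs.1 hϖ.le)
    set k : ℕ := K.toNat with hkdef
    have hkK : ((k : ℕ) : ℝ) = (K : ℝ) := by
      have h := Int.toNat_of_nonneg hK0
      exact_mod_cast congrArg (fun z : ℤ => (z : ℝ)) h
    have hkmem : k ∈ Finset.range (2 ^ m + 1) := by
      rw [Finset.mem_range, Nat.lt_succ_iff]
      rw [hkdef, Int.toNat_le]
      have hsT : s / ϖ ≤ ((2 ^ m : ℕ) : ℝ) := by
        rw [div_le_iff₀ hϖ]
        push_cast
        calc s ≤ T := le_trans hs.2 ht.2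
          _ = 2 ^ m * ϖ := by rw [hϖdef]; field_simp
      calc K ≤ ⌊((2 ^ m : ℕ) : ℝ)⌋ := Int.floor_le_floor hsT |>.trans_eq rfl
        _ = (2 ^ m : ℕ) := Int.floor_natCast _
    have hbd : ∀ i, bdot T m (B i) s ω = D i k ω := by
      intro i
      simp only [bdot, hDdef, ← hϖdef, ← hKdef, ← hkK]
    -- norm bound
    have hc : ∀ i ∈ Finset.range m, |bdot T m (B i) s ω| ≤ a := by
      intro i hi
      rw [hbd i]
      exact hnot i hi k hkmem
    have hnormsq : ‖Wdot T m B e s ω‖ ^ 2 =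
        ∑ i ∈ Finset.range m, bdot T m (B i) s ω * bdot T m (B i) s ω := by
      rw [Wdot, ← real_inner_self_eq_norm_sq]
      simpa using he.inner_sum (fun i => bdot T m (B i) s ω)
        (fun i => bdot T m (B i) s ω) (Finset.range m)
    have hsum : ∑ i ∈ Finset.range m, bdot T m (B i) s ω * bdot T m (B i) s ω ≤ (m : ℝ) * a ^ 2 := by
      calc ∑ i ∈ Finset.range m, bdot T m (B i) s ω * bdot T m (B i) s ω
          ≤ ∑ _i ∈ Finset.range m, a ^ 2 := by
            apply Finset.sum_le_sum
            intro i hi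
            have h1 := abs_le.mp (hc i hi)
            nlinarith [h1.1, h1.2]
        _ = (m : ℝ) * a ^ 2 := by
            rw [Finset.sum_const, Finset.card_range, nsmul_eq_mul]
    have hR2 : (m : ℝ) * a ^ 2 = R ^ 2 := by
      have ha2 : a ^ 2 = δ ^ 2 * (m : ℝ) * 2 ^ m := by
        rw [hadef, mul_pow, mul_pow, hsqm, hsq2m]
      have hRsq : R ^ 2 = δ ^ 2 * (m : ℝ) ^ 2 * 2 ^ m := by
        rw [hRdef, mul_pow, mul_pow, hsq2m]
      rw [ha2, hRsq]; ring
    have : ‖Wdot T m B e s ω‖ ^ 2 ≤ R ^ 2 := by rw [hnormsq]; linarith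
    exact le_of_pow_le_pow_left₀ two_ne_zero hR this
  -- measurability of B
  have hBmeas : ∀ i (r : ℝ), Measurable (fun ω => B i r ω) := fun i r =>
    ((hBM i).adapted r).mono (F.le r) le_rfl
  -- individual bound
  have hA : ∀ i ∈ Finset.range m, ∀ k ∈ Finset.range (2 ^ m + 1),
      P (A i k) ≤ ENNReal.ofReal (2 * Real.exp (-(δ ^ 2 * T / 4) * m)) := by
    intro i _ k _
    rcases Nat.eq_zero_or_pos k with hk0 | hkpos
    · have hzero : ∀ ω, D i k ω = 0 := by
        intro ω
        have e1 : B i (((k : ℕ) : ℝ) * ϖ) ω = 0 := by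
          apply (hBM i).zero_of_nonpos
          rw [hk0]; push_cast; rw [zero_mul]
        have e2 : B i ((((k : ℕ) : ℝ) - 1) * ϖ) ω = 0 := by
          apply (hBM i).zero_of_nonpos
          rw [hk0]; push_cast; nlinarith [hϖ]
        simp [hDdef, e1, e2]
      have hempty : A i k = ∅ := by
        ext ω
        simp [hAdef, hzero ω, not_lt, ha]
      rw [hempty]
      simp
    · -- k ≥ 1
      set f : Ω → ℝ := fun ω => B i ((k : ℝ) * ϖ) ω - B i (((k : ℝ) - 1) * ϖ) ω with hfdef
      have hf : Measurable f := (hBmeas i _).sub (hBmeas i _)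
      have hk1 : (1 : ℝ) ≤ (k : ℝ) := by exact_mod_cast hkpos
      have hlaw : P.map f = gaussianReal 0 (Real.toNNReal ϖ) := by
        have h := (hBM i).gauss_incr (((k : ℝ) - 1) * ϖ) ((k : ℝ) * ϖ)
          (by nlinarith) (by nlinarith)
        rw [hfdef]
        rw [h]
        congr 1
        ring_nf
      have hset : A i k = f ⁻¹' {x : ℝ | a * ϖ < |x|} := by
        ext ω
        simp only [hAdef, Set.mem_setOf_eq, Set.mem_preimage, hDdef, hfdef]
        rw [abs_div, abs_of_pos hϖ, lt_div_iff₀ hϖ]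
      have hS : MeasurableSet {x : ℝ | a * ϖ < |x|} :=
        measurableSet_lt measurable_const continuous_abs.measurable
      have hvne : Real.toNNReal ϖ ≠ 0 := by
        simp only [ne_eq, Real.toNNReal_eq_zero, not_le]
        exact hϖ
      have hcoe : ((Real.toNNReal ϖ : NNReal) : ℝ) = ϖ := Real.coe_toNNReal _ hϖ.le
      calc P (A i k) = (P.map f) {x : ℝ | a * ϖ < |x|} := by
            rw [hset, Measure.map_apply hf hS]
        _ = gaussianReal 0 (Real.toNNReal ϖ) {x : ℝ | a * ϖ < |x|} := by rw [hlaw]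
        _ ≤ ENNReal.ofReal (2 * Real.exp (-(a * ϖ) ^ 2 / (4 * (Real.toNNReal ϖ : ℝ)))) :=
            gauss_tail _ hvne _ (by positivity)
        _ = ENNReal.ofReal (2 * Real.exp (-(δ ^ 2 * T / 4) * m)) := by
            have ha2 : a ^ 2 = δ ^ 2 * (m : ℝ) * 2 ^ m := by
              rw [hadef, mul_pow, mul_pow, hsqm, hsq2m]
            have harg : -(a * ϖ) ^ 2 / (4 * ϖ) = -(δ ^ 2 * T / 4) * m := by
              rw [neg_div, neg_mul, neg_inj, mul_pow, ha2, hϖdef]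
              field_simp
            rw [hcoe, harg]
  -- combine
  calc P {ω | δ * m * Real.sqrt (2 ^ m) < ⨆ s ∈ Set.Icc (0 : ℝ) t, ‖Wdot T m B e s ω‖}
      ≤ P (⋃ i ∈ Finset.range m, ⋃ k ∈ Finset.range (2 ^ m + 1), A i k) := measure_mono hincl
    _ ≤ ∑ i ∈ Finset.range m, P (⋃ k ∈ Finset.range (2 ^ m + 1), A i k) :=
        measure_biUnion_finset_le _ _
    _ ≤ ∑ i ∈ Finset.range m, ∑ k ∈ Finset.range (2 ^ m + 1), P (A i k) :=
        Finset.sum_le_sum fun i _ => measure_biUnion_finset_le _ _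
    _ ≤ ∑ i ∈ Finset.range m, ∑ k ∈ Finset.range (2 ^ m + 1),
          ENNReal.ofReal (2 * Real.exp (-(δ ^ 2 * T / 4) * m)) :=
        Finset.sum_le_sum fun i hi => Finset.sum_le_sum fun k hk => hA i hi k hk
    _ = ((m * (2 ^ m + 1) : ℕ) : ENNReal) * ENNReal.ofReal (2 * Real.exp (-(δ ^ 2 * T / 4) * m)) := by
        simp [Finset.sum_const, Finset.card_range, mul_assoc]

lemma lim_aux {c : ℝ} (hc : 1 < c) :
    Tendsto (fun m : ℕ => ((m * (2 ^ m + 1) : ℕ) : ENNReal) *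
      ENNReal.ofReal (2 * Real.exp (-c * m))) atTop (nhds 0) := by
  have hε : 0 < c - Real.log 2 := by
    have h2 : Real.log 2 < 1 := by
      have := Real.log_two_lt_d9
      linarith
    linarith
  -- real-valued bound
  have hreal : Tendsto (fun m : ℕ => ((m * (2 ^ m + 1) : ℕ) : ℝ) * (2 * Real.exp (-c * m)))
      atTop (nhds 0) := by
    have hbase : Tendsto (fun m : ℕ =>
        (4 / (c - Real.log 2)) * (((c - Real.log 2) * m) ^ 1 *
          Real.exp (-((c - Real.log 2) * m)))) atTop (nhds 0) := by
      have h1 : Tendsto (fun x : ℝ => x ^ 1 * Real.exp (-x)) atTop (nhds 0) :=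
        Real.tendsto_pow_mul_exp_neg_atTop_nhds_zero 1
      have h2 : Tendsto (fun m : ℕ => (c - Real.log 2) * m) atTop atTop :=
        Tendsto.const_mul_atTop hε tendsto_natCast_atTop_atTop
      simpa using (h1.comp h2).const_mul (4 / (c - Real.log 2))
    apply squeeze_zero (fun m => by positivity) _ hbase
    intro m
    have hexp2 : (2 : ℝ) ^ m = Real.exp (Real.log 2 * m) := by
      rw [mul_comm, Real.exp_nat_mul, Real.exp_log two_pos]
    have h1 : ((m * (2 ^ m + 1) : ℕ) : ℝ) ≤ 2 * m * 2 ^ m := by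
      push_cast
      have h2m : (1 : ℝ) ≤ 2 ^ m := one_le_pow₀ (by norm_num)
      nlinarith [Nat.cast_nonneg (α := ℝ) m]
    calc ((m * (2 ^ m + 1) : ℕ) : ℝ) * (2 * Real.exp (-c * m))
        ≤ (2 * m * 2 ^ m) * (2 * Real.exp (-c * m)) := by
          apply mul_le_mul_of_nonneg_right h1 (by positivity)
      _ = (4 / (c - Real.log 2)) * (((c - Real.log 2) * m) ^ 1 *
          Real.exp (-((c - Real.log 2) * m))) := by
          rw [hexp2, pow_one]
          have he : Real.exp (Real.log 2 * m) * Real.exp (-c * m) =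
              Real.exp (-((c - Real.log 2) * m)) := by
            rw [← Real.exp_add]; congr 1; ring
          calc 2 * (m : ℝ) * Real.exp (Real.log 2 * m) * (2 * Real.exp (-c * m))
              = 4 * m * (Real.exp (Real.log 2 * m) * Real.exp (-c * m)) := by ring
            _ = 4 * m * Real.exp (-((c - Real.log 2) * m)) := by rw [he]
            _ = 4 / (c - Real.log 2) * ((c - Real.log 2) * m *
                Real.exp (-((c - Real.log 2) * m))) := by
                field_simp
  have := ENNReal.tendsto_ofReal hreal
  rw [ENNReal.ofReal_zero] at this
  apply this.congr
  intro m
  rw [ENNReal.ofReal_mul (by positivity), ENNReal.ofReal_natCast]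

end StatementSixAux

/-- there is `δ₀ > 0` such that for every `δ > δ₀/√T` and every
`t ∈ [0,T]`, `P( sup_{s∈[0,t]} ‖Ẇᵐ(s)‖_U > δ m 2^{m/2} ) → 0` as `m → ∞`. -/
theorem statement6 (T : ℝ) (hT : 0 < T) (P : Measure Ω) [IsProbabilityMeasure P]
    (F : Filtration ℝ mΩ) (B : ℕ → ℝ → Ω → ℝ)
    (hBM : ∀ i, IsBM P F (B i)) (hind : IndepFamily P B)
    (e : ℕ → U) (he : Orthonormal ℝ e) :
    ∃ δ₀ : ℝ, 0 < δ₀ ∧ ∀ δ : ℝ, δ₀ / Real.sqrt T < δ → ∀ t ∈ Set.Icc (0 : ℝ) T,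
      Tendsto
        (fun m : ℕ =>
          P {ω | δ * m * Real.sqrt (2 ^ m) <
              ⨆ s ∈ Set.Icc (0 : ℝ) t, ‖Wdot T m B e s ω‖})
        atTop (nhds 0) := by
  refine ⟨2, by norm_num, ?_⟩
  intro δ hδ t ht
  have hsT : 0 < Real.sqrt T := Real.sqrt_pos.mpr hT
  have h2 : 2 < δ * Real.sqrt T := (div_lt_iff₀ hsT).mp hδ
  have hδpos : 0 < δ := by nlinarith
  have hc : 1 < δ ^ 2 * T / 4 := by
    nlinarith [Real.sq_sqrt hT.le, sq_nonneg (δ * Real.sqrt T - 2)]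
  exact tendsto_of_tendsto_of_tendsto_of_le_of_le tendsto_const_nhds (lim_aux hc)
    (fun m => zero_le) (fun m => perm_bound T hT P F B hBM e he hδpos ht m)


end
end

section
/- Let T > 0, m ∈ ℕ, ϖ := T/2^m and τ ∈ [0,T]. Then for every measurable function h: [0,T] → [0,∞]: ∫_0^τ ( ∫_{⌊s/ϖ⌋ϖ}^{s} h(l) dl ) ds ≤ ϖ ∫_0^τ h(s) ds. -/
open MeasureTheory

/-!
STATEMENT 11: `∫_0^τ (∫_{⌊s/ϖ⌋ϖ}^s h(l) dl) ds ≤ ϖ ∫_0^τ h(s) ds`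
with `ϖ = T / 2^m`.
-/

theorem statement11 (T : ℝ) (hT : 0 < T) (m : ℕ) (τ : ℝ)
    (hτ : τ ∈ Set.Icc (0 : ℝ) T) (h : ℝ → ENNReal) (hmeas : Measurable h) :
    (∫⁻ s in Set.Ioc (0 : ℝ) τ,
        ∫⁻ l in Set.Ioc ((⌊s / (T / 2 ^ m)⌋ : ℝ) * (T / 2 ^ m)) s, h l) ≤
      ENNReal.ofReal (T / 2 ^ m) * ∫⁻ s in Set.Ioc (0 : ℝ) τ, h s := by
  set ϖ : ℝ := T / 2 ^ m with hϖdef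
  have hϖ : 0 < ϖ := by positivity
  -- the bounding function
  set F : ℝ → ℝ → ENNReal := fun l s =>
    (Set.Ioc (0:ℝ) τ).indicator h l *
      (Set.Ico l (l + ϖ)).indicator (fun _ => (1:ENNReal)) s with hF
  have hFmeas : Measurable (Function.uncurry F) := by
    have h1 : Measurable fun p : ℝ × ℝ => (Set.Ioc (0:ℝ) τ).indicator h p.1 :=
      (hmeas.indicator measurableSet_Ioc).comp measurable_fst
    have hS : MeasurableSet {p : ℝ × ℝ | p.1 ≤ p.2 ∧ p.2 < p.1 + ϖ} :=
      (measurableSet_le measurable_fst measurable_snd).inter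
        (measurableSet_lt measurable_snd (measurable_fst.add_const ϖ))
    have h2 : Measurable fun p : ℝ × ℝ =>
        (Set.Ico p.1 (p.1 + ϖ)).indicator (fun _ => (1:ENNReal)) p.2 := by
      have : (fun p : ℝ × ℝ =>
          (Set.Ico p.1 (p.1 + ϖ)).indicator (fun _ => (1:ENNReal)) p.2)
          = {p : ℝ × ℝ | p.1 ≤ p.2 ∧ p.2 < p.1 + ϖ}.indicator
              (fun _ => (1:ENNReal)) := by
        funext p
        simp [Set.indicator, Set.mem_Ico]
      rw [this]
      exact (measurable_const).indicator hS
    exact h1.mul h2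
  -- step 1 : pointwise bound on the inner integral
  have step1 : ∀ s ∈ Set.Ioc (0:ℝ) τ,
      (∫⁻ l in Set.Ioc ((⌊s / ϖ⌋ : ℝ) * ϖ) s, h l) ≤ ∫⁻ l, F l s := by
    intro s hs
    rw [← lintegral_indicator measurableSet_Ioc]
    refine lintegral_mono fun l => ?_
    by_cases hl : l ∈ Set.Ioc ((⌊s / ϖ⌋ : ℝ) * ϖ) s
    · have hfl0 : (0:ℝ) ≤ (⌊s / ϖ⌋ : ℝ) * ϖ := by
        have : (0:ℤ) ≤ ⌊s / ϖ⌋ := Int.floor_nonneg.2 (div_nonneg hs.1.le hϖ.le)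
        have h0 : (0:ℝ) ≤ (⌊s / ϖ⌋ : ℝ) := by exact_mod_cast this
        exact mul_nonneg h0 hϖ.le
      have hl1 : l ∈ Set.Ioc (0:ℝ) τ :=
        ⟨lt_of_le_of_lt hfl0 hl.1, hl.2.trans hs.2⟩
      have hs1 : s ∈ Set.Ico l (l + ϖ) := by
        constructor
        · exact hl.2
        · have hfloor : s - ϖ < (⌊s / ϖ⌋ : ℝ) * ϖ := by
            have := Int.sub_one_lt_floor (s / ϖ)
            have h2 : (s / ϖ - 1) * ϖ < (⌊s / ϖ⌋ : ℝ) * ϖ :=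
              mul_lt_mul_of_pos_right (by exact_mod_cast this) hϖ
            calc s - ϖ = (s / ϖ - 1) * ϖ := by field_simp
              _ < _ := h2
          linarith [hl.1]
      rw [Set.indicator_of_mem hl, hF]
      simp [Set.indicator_of_mem hl1, Set.indicator_of_mem hs1]
    · rw [Set.indicator_of_notMem hl]
      exact zero_le
  -- step 2 : integrate the bound and swap
  calc (∫⁻ s in Set.Ioc (0 : ℝ) τ, ∫⁻ l in Set.Ioc ((⌊s / ϖ⌋ : ℝ) * ϖ) s, h l)
      ≤ ∫⁻ s in Set.Ioc (0:ℝ) τ, ∫⁻ l, F l s := by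
        refine setLIntegral_mono ?_ step1
        exact hFmeas.lintegral_prod_left'
    _ = ∫⁻ l, ∫⁻ s in Set.Ioc (0:ℝ) τ, F l s := by
        exact lintegral_lintegral_swap ((hFmeas.comp measurable_swap).aemeasurable)
    _ ≤ ∫⁻ l, ENNReal.ofReal ϖ * (Set.Ioc (0:ℝ) τ).indicator h l := by
        refine lintegral_mono fun l => ?_
        have : (∫⁻ s in Set.Ioc (0:ℝ) τ,
            (Set.Ico l (l + ϖ)).indicator (fun _ => (1:ENNReal)) s)
            ≤ ENNReal.ofReal ϖ := by
          calc (∫⁻ s in Set.Ioc (0:ℝ) τ,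
                (Set.Ico l (l + ϖ)).indicator (fun _ => (1:ENNReal)) s)
              ≤ ∫⁻ s, (Set.Ico l (l + ϖ)).indicator (fun _ => (1:ENNReal)) s :=
                setLIntegral_le_lintegral _ _
            _ = volume (Set.Ico l (l + ϖ)) := lintegral_indicator_one measurableSet_Ico
            _ = ENNReal.ofReal ϖ := by rw [Real.volume_Ico]; ring_nf
        rw [hF]
        rw [lintegral_const_mul _ ((measurable_const.indicator measurableSet_Ico))]
        calc (Set.Ioc (0:ℝ) τ).indicator h l * _ ≤
            (Set.Ioc (0:ℝ) τ).indicator h l * ENNReal.ofReal ϖ :=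
              mul_le_mul_right this _
          _ = _ := mul_comm _ _
    _ = ENNReal.ofReal ϖ * ∫⁻ s in Set.Ioc (0 : ℝ) τ, h s := by
        rw [lintegral_const_mul' _ _ ENNReal.ofReal_ne_top,
          lintegral_indicator measurableSet_Ioc]
end

section
/- Let T > 0, m ∈ ℕ, ϖ := T/2^m and τ ∈ [0,T]. Then for every measurable function h: [0,T] → [0,∞]: ∫_0^τ ( ∫_{max(⌊s/ϖ⌋−1, 0)ϖ}^{s} h(l) dl ) ds ≤ 2ϖ ∫_0^τ h(l) dl. -/
open MeasureTheory

/-!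
STATEMENT 12: `∫_0^τ (∫_{max(⌊s/ϖ⌋−1,0)ϖ}^s h(l) dl) ds ≤ 2ϖ ∫_0^τ h(l) dl`
with `ϖ = T / 2^m`.
-/

theorem statement12 (T : ℝ) (hT : 0 < T) (m : ℕ) (τ : ℝ)
    (hτ : τ ∈ Set.Icc (0 : ℝ) T) (h : ℝ → ENNReal) (hmeas : Measurable h) :
    (∫⁻ s in Set.Ioc (0 : ℝ) τ,
        ∫⁻ l in Set.Ioc (((max (⌊s / (T / 2 ^ m)⌋ - 1) 0 : ℤ) : ℝ) * (T / 2 ^ m)) s,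
          h l) ≤
      ENNReal.ofReal (2 * (T / 2 ^ m)) * ∫⁻ l in Set.Ioc (0 : ℝ) τ, h l := by
  set ϖ : ℝ := T / 2 ^ m with hϖdef
  have hϖ : 0 < ϖ := by positivity
  -- the product-measurable majorant
  set F : ℝ → ℝ → ENNReal := fun s l => (Set.Ico l (l + 2 * ϖ)).indicator (fun _ => h l) s
    with hF
  have hFmeas : Measurable (Function.uncurry F) := by
    have : Function.uncurry F =
        Set.indicator {p : ℝ × ℝ | p.2 ≤ p.1 ∧ p.1 < p.2 + 2 * ϖ} (fun p => h p.2) := by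
      ext p
      rcases p with ⟨s, l⟩
      simp only [Function.uncurry, hF, Set.indicator, Set.mem_Ico, Set.mem_setOf_eq]
    rw [this]
    apply Measurable.indicator (hmeas.comp measurable_snd)
    apply MeasurableSet.inter
    · exact measurableSet_le measurable_snd measurable_fst
    · exact measurableSet_lt measurable_fst (by measurability)
  have key : ∀ s ∈ Set.Ioc (0 : ℝ) τ,
      (∫⁻ l in Set.Ioc (((max (⌊s / ϖ⌋ - 1) 0 : ℤ) : ℝ) * ϖ) s, h l)
        ≤ ∫⁻ l in Set.Ioc (0 : ℝ) τ, F s l := by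
    intro s hs
    rw [← lintegral_indicator measurableSet_Ioc, ← lintegral_indicator measurableSet_Ioc]
    refine lintegral_mono fun l => ?_
    by_cases hl : l ∈ Set.Ioc (((max (⌊s / ϖ⌋ - 1) 0 : ℤ) : ℝ) * ϖ) s
    · rw [Set.indicator_of_mem hl]
      have ha0 : (0 : ℝ) ≤ ((max (⌊s / ϖ⌋ - 1) 0 : ℤ) : ℝ) * ϖ := by
        apply mul_nonneg _ hϖ.le
        exact_mod_cast le_max_right (⌊s / ϖ⌋ - 1) 0
      have hl0 : l ∈ Set.Ioc (0 : ℝ) τ := ⟨lt_of_le_of_lt ha0 hl.1, hl.2.trans hs.2⟩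
      have hs2 : s ∈ Set.Ico l (l + 2 * ϖ) := by
        refine ⟨hl.2, ?_⟩
        have h1 : s / ϖ - 1 < (⌊s / ϖ⌋ : ℝ) := Int.sub_one_lt_floor _
        have h2 : ((⌊s / ϖ⌋ - 1 : ℤ) : ℝ) ≤ ((max (⌊s / ϖ⌋ - 1) 0 : ℤ) : ℝ) := by
          exact_mod_cast le_max_left (⌊s / ϖ⌋ - 1) 0
        have h3 : (s / ϖ - 2) * ϖ < ((⌊s / ϖ⌋ - 1 : ℤ) : ℝ) * ϖ := by
          apply mul_lt_mul_of_pos_right _ hϖ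
          push_cast
          linarith
        have h4 : s - 2 * ϖ = (s / ϖ - 2) * ϖ := by field_simp
        have h5 : ((⌊s / ϖ⌋ - 1 : ℤ) : ℝ) * ϖ ≤ ((max (⌊s / ϖ⌋ - 1) 0 : ℤ) : ℝ) * ϖ :=
          mul_le_mul_of_nonneg_right h2 hϖ.le
        have := hl.1
        nlinarith
      rw [Set.indicator_of_mem hl0]
      simp only [hF, Set.indicator_of_mem hs2]
      exact le_refl _
    · rw [Set.indicator_of_notMem hl]; exact zero_le
  calc (∫⁻ s in Set.Ioc (0 : ℝ) τ,
        ∫⁻ l in Set.Ioc (((max (⌊s / ϖ⌋ - 1) 0 : ℤ) : ℝ) * ϖ) s, h l)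
      ≤ ∫⁻ s in Set.Ioc (0 : ℝ) τ, ∫⁻ l in Set.Ioc (0 : ℝ) τ, F s l := by
        refine setLIntegral_mono ?_ key
        exact hFmeas.lintegral_prod_right'
    _ = ∫⁻ l in Set.Ioc (0 : ℝ) τ, ∫⁻ s in Set.Ioc (0 : ℝ) τ, F s l := by
        apply lintegral_lintegral_swap
        exact (hFmeas.aemeasurable)
    _ ≤ ∫⁻ l in Set.Ioc (0 : ℝ) τ, ENNReal.ofReal (2 * ϖ) * h l := by
        refine lintegral_mono fun l => ?_
        calc (∫⁻ s in Set.Ioc (0 : ℝ) τ, F s l)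
            ≤ ∫⁻ s, F s l := setLIntegral_le_lintegral _ _
          _ = h l * volume (Set.Ico l (l + 2 * ϖ)) := by
              simp only [hF]
              rw [lintegral_indicator_const measurableSet_Ico]
          _ = ENNReal.ofReal (2 * ϖ) * h l := by
              rw [Real.volume_Ico, mul_comm]
              congr 1
              ring_nf
    _ = ENNReal.ofReal (2 * ϖ) * ∫⁻ l in Set.Ioc (0 : ℝ) τ, h l := by
        rw [lintegral_const_mul _ hmeas]
end
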